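/- Let Φ = (G, φ) be a T-gain graph on a connected graph G. Then E(Φ) ≥ 2ρ(Φ), where ρ(Φ) is the spectral radius of A(Φ). If G is bipartite, equality holds if and only if Φ ∼ (K_{p,q}, 1) for some p, q. -/

import Mathlib

open Matrix BigOperators
open scoped Classical ComplexOrder

/-- A complex unit gain graph (`𝕋`-gain graph) on a finite vertex type `V`. -/
structure TGainGraph (V : Type*) [Fintype V] [DecidableEq V] where
  G : SimpleGraph V
  A : Matrix V V ℂ
  herm : A.IsHermitian
  unitGain : ∀ i j, G.Adj i j → ‖A i j‖ = 1
  zeroGain : ∀ i j, ¬ G.Adj i j → A i j = 0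

namespace TGainGraph

variable {V : Type*} [Fintype V] [DecidableEq V]

/-- The energy of a `𝕋`-gain graph: sum of absolute values of eigenvalues of `A(Φ)`. -/
noncomputable def energy (Φ : TGainGraph V) : ℝ :=
  ∑ i, |Φ.herm.eigenvalues i|

/-- `|A(Φ)| = (A(Φ) A(Φ)ᴴ)^{1/2}`. -/
noncomputable def absMatrix (Φ : TGainGraph V) : Matrix V V ℂ :=
  ((Matrix.posSemidef_self_mul_conjTranspose Φ.A).1.eigenvectorUnitary : Matrix V V ℂ) *
    Matrix.diagonal (((↑) : ℝ → ℂ) ∘ Real.sqrt ∘ (Matrix.posSemidef_self_mul_conjTranspose Φ.A).1.eigenvalues) *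
    (star ((Matrix.posSemidef_self_mul_conjTranspose Φ.A).1.eigenvectorUnitary : Matrix V V ℂ))

/-- Energy of a vertex: the `(i,i)` entry of `|A(Φ)|`. -/
noncomputable def vertexEnergy (Φ : TGainGraph V) (i : V) : ℝ :=
  (Φ.absMatrix i i).re

/-- Degree of a vertex in the underlying graph. -/
noncomputable def deg (Φ : TGainGraph V) (i : V) : ℕ := Φ.G.degree i

/-- Maximum vertex degree of the underlying graph. -/
noncomputable def maxDeg (Φ : TGainGraph V) : ℕ := Φ.G.maxDegree

/-- Spectral radius of `A(Φ)`. -/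
noncomputable def specRadius (Φ : TGainGraph V) : ℝ :=
  ⨆ i, |Φ.herm.eigenvalues i|

/-- Switching equivalence of two gain graphs on the same vertex set: same
underlying graph, and adjacency matrices conjugate by a diagonal unitary. -/
def SwitchEquiv (Φ₁ Φ₂ : TGainGraph V) : Prop :=
  Φ₁.G = Φ₂.G ∧ ∃ U : Matrix V V ℂ, U.IsDiag ∧ U ∈ Matrix.unitaryGroup V ℂ ∧
    Φ₁.A = U * Φ₂.A * Uᴴ

/-- `Φ` switches to the all-ones gain on its underlying graph,
i.e. `Φ ∼ (G, 1)` (equivalently, `Φ` is balanced). -/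
def SwitchesToOne (Φ : TGainGraph V) : Prop :=
  ∃ U : Matrix V V ℂ, U.IsDiag ∧ U ∈ Matrix.unitaryGroup V ℂ ∧
    Φ.A = U * (Φ.G.adjMatrix ℂ) * Uᴴ

/-- `Φ ∼ (K_{a,b}, 1)`: the underlying graph is (isomorphic to) the complete
bipartite graph `K_{a,b}` via some bijection `e`, and the gains switch to `1`. -/
def SwitchEquivToCompleteBipartite (Φ : TGainGraph V) (a b : ℕ) : Prop :=
  (∃ e : V ≃ (Fin a ⊕ Fin b), ∀ i j, Φ.G.Adj i j ↔
      (completeBipartiteGraph (Fin a) (Fin b)).Adj (e i) (e j)) ∧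
  SwitchesToOne Φ

/-- The gain of a walk: the product of the gains of its edges in order. -/
noncomputable def walkGain (Φ : TGainGraph V) {u v : V} (w : Φ.G.Walk u v) : ℂ :=
  (w.darts.map (fun d => Φ.A d.fst d.snd)).prod

/-- A gain graph is balanced if every cycle has gain `1`. -/
def Balanced (Φ : TGainGraph V) : Prop :=
  ∀ (u : V) (w : Φ.G.Walk u u), w.IsCycle → Φ.walkGain w = 1

/-- The restriction of a gain graph to a set of vertices. -/
noncomputable def restrict (Φ : TGainGraph V) (s : Set V) : TGainGraph s where
  G := Φ.G.induce s
  A := Φ.A.submatrix (Subtype.val) (Subtype.val)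
  herm := Φ.herm.submatrix _
  unitGain := fun i j h => Φ.unitGain i j h
  zeroGain := fun i j h => Φ.zeroGain i j h

/-- The vertex set of the connected component `c`. -/
def componentSet (Φ : TGainGraph V) (c : Φ.G.ConnectedComponent) : Set V :=
  {v | Φ.G.connectedComponentMk v = c}

/-- Every connected component of `Φ` is either an isolated vertex or a balanced
complete bipartite gain graph `(K_{k,k},1)` with a perfect matching. -/
def ComponentsBalancedCompleteBipartitePM (Φ : TGainGraph V) : Prop :=
  ∀ c : Φ.G.ConnectedComponent,
    (∀ v ∈ Φ.componentSet c, ∀ w, ¬ Φ.G.Adj v w) ∨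
    ∃ k : ℕ, 0 < k ∧
      (Φ.restrict (Φ.componentSet c)).SwitchEquivToCompleteBipartite k k

/-- The matching number of a graph. -/
noncomputable def matchingNumber (G : SimpleGraph V) : ℕ :=
  sSup {k | ∃ M : G.Subgraph, M.IsMatching ∧ M.edgeSet.ncard = k}

/-- The vertex cover number of a graph. -/
noncomputable def coverNumber (G : SimpleGraph V) : ℕ :=
  sInf {k | ∃ s : Finset V, s.card = k ∧ ∀ i j, G.Adj i j → i ∈ s ∨ j ∈ s}

/-- The number of odd cycles of a graph (counted by their edge sets). -/
noncomputable def oddCycleCount (G : SimpleGraph V) : ℕ :=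
  Set.ncard {s : Set (Sym2 V) | ∃ (u : V) (w : G.Walk u u),
    w.IsCycle ∧ Odd w.length ∧ s = {e | e ∈ w.edges}}

end TGainGraph

section Aux

open TGainGraph

variable {V : Type*} [Fintype V] [DecidableEq V]

namespace TGainGraph

lemma diag_zero (Φ : TGainGraph V) (i : V) : Φ.A i i = 0 :=
  Φ.zeroGain i i (Φ.G.loopless.irrefl i)

lemma adj_iff_ne_zero (Φ : TGainGraph V) (i j : V) : Φ.G.Adj i j ↔ Φ.A i j ≠ 0 := by
  constructor
  · intro h hz
    have := Φ.unitGain i j h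
    rw [hz] at this; simp at this
  · intro h
    by_contra hn
    exact h (Φ.zeroGain i j hn)

lemma eig_sum_zero (Φ : TGainGraph V) : ∑ i, Φ.herm.eigenvalues i = 0 := by
  have htr : Φ.A.trace = 0 := by
    simp [Matrix.trace, Matrix.diag, Φ.diag_zero]
  have h2 : Φ.A.trace = ∑ i, (Φ.herm.eigenvalues i : ℂ) := by
    conv_lhs => rw [Φ.herm.spectral_theorem, Unitary.conjStarAlgAut_apply]
    rw [Matrix.trace_mul_cycle]
    rw [(Matrix.mem_unitaryGroup_iff').mp (Matrix.IsHermitian.eigenvectorUnitary Φ.herm).2, Matrix.one_mul]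
    simp [Matrix.trace, Matrix.diag]
  rw [htr] at h2
  have := h2.symm
  rw [show ((0:ℂ)) = ((0:ℝ):ℂ) by norm_num] at this
  push_cast at this
  exact_mod_cast this

lemma abs_eig_le_specRadius (Φ : TGainGraph V) (i : V) :
    |Φ.herm.eigenvalues i| ≤ Φ.specRadius := by
  rw [specRadius]
  exact le_ciSup (Set.Finite.bddAbove (Set.finite_range (fun i => |Φ.herm.eigenvalues i|))) i

lemma exists_abs_eig_eq [Nonempty V] (Φ : TGainGraph V) :
    ∃ j, |Φ.herm.eigenvalues j| = Φ.specRadius := by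
  obtain ⟨j, hj⟩ := Finite.exists_max (fun i => |Φ.herm.eigenvalues i|)
  refine ⟨j, le_antisymm (Φ.abs_eig_le_specRadius j) (ciSup_le hj)⟩

lemma specRadius_nonneg [Nonempty V] (Φ : TGainGraph V) : 0 ≤ Φ.specRadius := by
  obtain ⟨j, hj⟩ := Φ.exists_abs_eig_eq
  exact hj ▸ abs_nonneg _

lemma two_mul_specRadius_le [Nonempty V] (Φ : TGainGraph V) :
    2 * Φ.specRadius ≤ Φ.energy := by
  obtain ⟨j, hj⟩ := Φ.exists_abs_eig_eq
  set μ := Φ.herm.eigenvalues with hμ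
  have hsum : ∑ i ∈ Finset.univ.erase j, μ i = -μ j := by
    have := Φ.eig_sum_zero
    have h := Finset.add_sum_erase Finset.univ μ (Finset.mem_univ j)
    rw [this] at h
    linarith
  have h1 : |μ j| ≤ ∑ i ∈ Finset.univ.erase j, |μ i| := by
    calc |μ j| = |∑ i ∈ Finset.univ.erase j, μ i| := by rw [hsum, abs_neg]
    _ ≤ ∑ i ∈ Finset.univ.erase j, |μ i| := Finset.abs_sum_le_sum_abs _ _
  have h2 : Φ.energy = |μ j| + ∑ i ∈ Finset.univ.erase j, |μ i| :=
    (Finset.add_sum_erase Finset.univ (fun i => |μ i|) (Finset.mem_univ j)).symm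
  rw [← hj, h2]; linarith

lemma energy_le_of_rank_le_two [Nonempty V] (Φ : TGainGraph V) (h : Φ.A.rank ≤ 2) :
    Φ.energy ≤ 2 * Φ.specRadius := by
  classical
  set μ := Φ.herm.eigenvalues with hμ
  have hcard : (Finset.univ.filter (fun i => μ i ≠ 0)).card ≤ 2 := by
    have := Φ.herm.rank_eq_card_non_zero_eigs
    rw [this] at h
    rwa [Fintype.card_subtype] at h
  have h1 : Φ.energy = ∑ i ∈ Finset.univ.filter (fun i => μ i ≠ 0), |μ i| := by
    rw [energy]
    rw [← Finset.sum_filter_ne_zero]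
    congr 1
    ext i
    simp [abs_ne_zero, hμ]
  rw [h1]
  calc ∑ i ∈ Finset.univ.filter (fun i => μ i ≠ 0), |μ i|
      ≤ ∑ _i ∈ Finset.univ.filter (fun i => μ i ≠ 0), Φ.specRadius :=
        Finset.sum_le_sum (fun i _ => Φ.abs_eig_le_specRadius i)
    _ = (Finset.univ.filter (fun i => μ i ≠ 0)).card * Φ.specRadius := by
        rw [Finset.sum_const, nsmul_eq_mul]
    _ ≤ 2 * Φ.specRadius := by
        have := Φ.specRadius_nonneg
        have : ((Finset.univ.filter (fun i => μ i ≠ 0)).card : ℝ) ≤ 2 := by exact_mod_cast hcard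
        nlinarith [Φ.specRadius_nonneg]


open Submodule in
lemma rank_le_two_of_switchEquiv (Φ : TGainGraph V) {p q : ℕ}
    (h : Φ.SwitchEquivToCompleteBipartite p q) : Φ.A.rank ≤ 2 := by
  obtain ⟨⟨e, he⟩, U, hUdiag, hUmem, hA⟩ := h
  set B := Φ.G.adjMatrix ℂ with hB
  have hrB : B.rank ≤ 2 := by
    set χL : V → ℂ := fun u => if (e u).isLeft then 1 else 0 with hχL
    set χR : V → ℂ := fun u => if (e u).isRight then 1 else 0 with hχR
    have key : ∀ x : V → ℂ, B *ᵥ x =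
        (∑ v, χR v * x v) • χL + (∑ v, χL v * x v) • χR := by
      intro x
      funext u
      simp only [Matrix.mulVec, dotProduct, Pi.add_apply, Pi.smul_apply, smul_eq_mul]
      rcases hu : e u with a | a
      · have : ∀ v, B u v * x v = χR v * x v := by
          intro v
          rw [hB, SimpleGraph.adjMatrix_apply, he u v, hu]
          rcases hv : e v with b | b <;> simp [hχR, hv]
        rw [Finset.sum_congr rfl (fun v _ => this v)]
        simp [hχL, hχR, hu]
      · have : ∀ v, B u v * x v = χL v * x v := by
          intro v
          rw [hB, SimpleGraph.adjMatrix_apply, he u v, hu]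
          rcases hv : e v with b | b <;> simp [hχL, hv]
        rw [Finset.sum_congr rfl (fun v _ => this v)]
        simp [hχL, hχR, hu]
    have hle : LinearMap.range B.mulVecLin ≤ span ℂ ({χL, χR} : Set (V → ℂ)) := by
      rintro y ⟨x, rfl⟩
      rw [Matrix.mulVecLin_apply, key x]
      exact Submodule.mem_span_pair.mpr ⟨_, _, rfl⟩
    have h2 : Module.finrank ℂ (span ℂ ({χL, χR} : Set (V → ℂ))) ≤ 2 := by
      have := finrank_span_le_card (R := ℂ) ({χL, χR} : Set (V → ℂ))
      refine this.trans ?_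
      have : ({χL, χR} : Set (V → ℂ)).toFinset ⊆ {χL, χR} := by
        intro z hz
        simp only [Set.mem_toFinset] at hz
        simpa using hz
      calc ({χL, χR} : Set (V → ℂ)).toFinset.card ≤ ({χL, χR} : Finset (V → ℂ)).card :=
            Finset.card_le_card this
        _ ≤ 2 := Finset.card_insert_le _ _ |>.trans (by simp)
    exact le_trans (Submodule.finrank_mono hle) h2
  calc Φ.A.rank = (U * (B * Uᴴ)).rank := by rw [hA, Matrix.mul_assoc]
    _ ≤ (B * Uᴴ).rank := Matrix.rank_mul_le_right _ _
    _ ≤ B.rank := Matrix.rank_mul_le_left _ _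
    _ ≤ 2 := hrB


lemma range_pair_eq {M : Type*} (a b : M) : Set.range ![a, b] = {a, b} := by
  ext z
  simp only [Set.mem_range, Fin.exists_fin_two, Matrix.cons_val_zero, Matrix.cons_val_one,
    Matrix.head_cons, Set.mem_insert_iff, Set.mem_singleton_iff]
  tauto

lemma finrank_span_pair_le (a b : V → ℂ) :
    Module.finrank ℂ (Submodule.span ℂ ({a, b} : Set (V → ℂ))) ≤ 2 := by
  have h := finrank_span_le_card (R := ℂ) ({a, b} : Set (V → ℂ))
  refine h.trans ?_
  have hsub : ({a, b} : Set (V → ℂ)).toFinset ⊆ {a, b} := by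
    intro z hz
    simp only [Set.mem_toFinset] at hz
    simpa using hz
  calc ({a, b} : Set (V → ℂ)).toFinset.card ≤ ({a, b} : Finset (V → ℂ)).card :=
        Finset.card_le_card hsub
    _ ≤ 2 := Finset.card_insert_le _ _ |>.trans (by simp)

lemma fin2_resolve : ∀ a b w : Fin 2, a ≠ b → w ≠ a → w = b := by decide


lemma entry_formula (Φ : TGainGraph V) (i k : V) :
    Φ.A i k = ∑ m, (Φ.herm.eigenvectorUnitary : Matrix V V ℂ) i m * (Φ.herm.eigenvalues m : ℂ)
      * (starRingEnd ℂ) ((Φ.herm.eigenvectorUnitary : Matrix V V ℂ) k m) := by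
  conv_lhs => rw [Φ.herm.spectral_theorem, Unitary.conjStarAlgAut_apply]
  rw [Matrix.mul_apply]
  refine Finset.sum_congr rfl fun m _ => ?_
  rw [Matrix.mul_diagonal, Matrix.star_apply]
  rfl

lemma forward_case (Φ : TGainGraph V) (hconn : Φ.G.Connected) (hcol : Φ.G.Colorable 2)
    (heq : Φ.energy = 2 * Φ.specRadius) :
    ∃ p q : ℕ, Φ.SwitchEquivToCompleteBipartite p q := by
  have hne : Nonempty V := hconn.nonempty
  obtain ⟨j, hj⟩ := Φ.exists_abs_eig_eq
  set μ := Φ.herm.eigenvalues with hμdef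
  by_cases hρ : Φ.specRadius = 0
  · -- no edges, single vertex
    have hμ0 : ∀ i, μ i = 0 := by
      intro i
      have h1 := Φ.abs_eig_le_specRadius i
      rw [hρ] at h1
      exact abs_eq_zero.mp (le_antisymm h1 (abs_nonneg _))
    have hA0 : Φ.A = 0 := by
      conv_lhs => rw [Φ.herm.spectral_theorem]
      have : Matrix.diagonal (RCLike.ofReal ∘ μ) = (0 : Matrix V V ℂ) := by
        ext a b
        by_cases hab : a = b <;> simp [Matrix.diagonal, hab, hμ0]
      rw [show RCLike.ofReal ∘ Φ.herm.eigenvalues = RCLike.ofReal ∘ μ from rfl, this]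
      simp
    have hnoadj : ∀ u v, ¬ Φ.G.Adj u v := by
      intro u v hadj
      have := (Φ.adj_iff_ne_zero u v).mp hadj
      rw [hA0] at this
      simp at this
    have hsub : ∀ u v : V, u = v := by
      intro u v
      obtain ⟨w⟩ := hconn.preconnected u v
      cases w with
      | nil => rfl
      | cons h _ => exact absurd h (hnoadj _ _)
    have hcard : Fintype.card V = 1 := by
      obtain ⟨v⟩ := hne
      exact Fintype.card_eq_one_iff.mpr ⟨v, fun y => hsub y v⟩
    have ecard : Fintype.card V = Fintype.card (Fin 1 ⊕ Fin 0) := by simp [hcard]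
    set e := Fintype.equivOfCardEq ecard with hedef
    refine ⟨1, 0, ⟨⟨e, ?_⟩, 1, Matrix.isDiag_one, one_mem _, ?_⟩⟩
    · intro i k
      constructor
      · intro h; exact absurd h (hnoadj _ _)
      · intro h
        exfalso
        rcases hei : e i with a | a
        · rcases hek : e k with b | b
          · rw [hei, hek] at h; simp at h
          · exact b.elim0
        · exact a.elim0
    · have hadj0 : Φ.G.adjMatrix ℂ = 0 := by
        ext a b
        simp [SimpleGraph.adjMatrix_apply, hnoadj a b]
      rw [hadj0, hA0]
      simp
  · -- main case
    have hρpos : 0 < Φ.specRadius := lt_of_le_of_ne Φ.specRadius_nonneg (Ne.symm hρ)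
    obtain ⟨c⟩ := hcol
    set Vu : Matrix V V ℂ := (Φ.herm.eigenvectorUnitary : Matrix V V ℂ) with hVu
    have fin2cases : ∀ a b : Fin 2, a ≠ b → (a = 0 ∧ b = 1) ∨ (a = 1 ∧ b = 0) := by decide
    -- eigenvector machinery
    set x : V → ℂ := ⇑(Φ.herm.eigenvectorBasis j) with hx
    have hAx : Φ.A *ᵥ x = ((μ j : ℝ) : ℂ) • x := by
      have h := Φ.herm.mulVec_eigenvectorBasis j
      rwa [RCLike.real_smul_eq_coe_smul (K := ℂ)] at h
    have hxne : x ≠ 0 := by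
      intro h0
      have h1 := (Φ.herm.eigenvectorBasis).orthonormal.1 j
      have h2 : Φ.herm.eigenvectorBasis j = 0 := by
        ext v; exact congrFun h0 v
      rw [h2] at h1; simp at h1
    set d : V → ℂ := fun v => if c v = 0 then 1 else -1 with hd
    have hdne : ∀ v, d v ≠ 0 := by
      intro v
      rw [hd]
      by_cases h : c v = 0 <;> simp [h]
    have hdflip : ∀ u v, c u ≠ c v → d v = -d u := by
      intro u v h
      rcases fin2cases _ _ h with ⟨h1, h2⟩ | ⟨h1, h2⟩ <;> simp [hd, h1, h2]
    set y : V → ℂ := fun v => d v * x v with hy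
    have hyne : y ≠ 0 := by
      obtain ⟨v, hv⟩ := Function.ne_iff.mp hxne
      intro h0
      have h1 := congrFun h0 v
      simp only [hy, Pi.zero_apply] at h1
      exact hv ((mul_eq_zero.mp h1).resolve_left (hdne v))
    have hAy : Φ.A *ᵥ y = (-((μ j : ℝ) : ℂ)) • y := by
      funext u
      have key : ∀ v, Φ.A u v * (d v * x v) = -d u * (Φ.A u v * x v) := by
        intro v
        by_cases h0 : Φ.A u v = 0
        · rw [h0]; ring
        · have hadj := (Φ.adj_iff_ne_zero u v).mpr h0
          rw [hdflip u v (c.valid hadj)]; ring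
      have h2 : ∑ v, Φ.A u v * x v = ((μ j : ℝ) : ℂ) * x u := by
        have h3 := congrFun hAx u
        simpa [Matrix.mulVec, dotProduct, smul_eq_mul] using h3
      calc (Φ.A *ᵥ y) u = ∑ v, Φ.A u v * (d v * x v) := by
            simp [Matrix.mulVec, dotProduct, hy]
        _ = ∑ v, -d u * (Φ.A u v * x v) := Finset.sum_congr rfl fun v _ => key v
        _ = -d u * ∑ v, Φ.A u v * x v := by rw [← Finset.mul_sum]
        _ = -d u * (((μ j : ℝ) : ℂ) * x u) := by rw [h2]
        _ = (-((μ j : ℝ) : ℂ)) * (d u * x u) := by ring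
        _ = ((-((μ j : ℝ) : ℂ)) • y) u := by simp [hy]
    have hsymm : ∃ i, μ i = -(μ j) := by
      set z : V → ℂ := star Vu *ᵥ y with hz
      have h1 : star Vu * Φ.A = Matrix.diagonal (RCLike.ofReal ∘ μ) * star Vu := by
        conv_lhs => rw [Φ.herm.spectral_theorem, Unitary.conjStarAlgAut_apply]
        rw [← Matrix.mul_assoc, ← Matrix.mul_assoc,
          (Matrix.mem_unitaryGroup_iff').mp Φ.herm.eigenvectorUnitary.2, Matrix.one_mul]
      have hdiagz : Matrix.diagonal (RCLike.ofReal ∘ μ) *ᵥ z = (-((μ j : ℝ) : ℂ)) • z := by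
        calc Matrix.diagonal (RCLike.ofReal ∘ μ) *ᵥ z
            = (Matrix.diagonal (RCLike.ofReal ∘ μ) * star Vu) *ᵥ y := by
              rw [hz, Matrix.mulVec_mulVec]
          _ = (star Vu * Φ.A) *ᵥ y := by rw [h1]
          _ = star Vu *ᵥ (Φ.A *ᵥ y) := by rw [Matrix.mulVec_mulVec]
          _ = star Vu *ᵥ ((-((μ j : ℝ) : ℂ)) • y) := by rw [hAy]
          _ = (-((μ j : ℝ) : ℂ)) • z := by rw [Matrix.mulVec_smul, hz]
      have hzne : z ≠ 0 := by
        intro h0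
        have h2 : y = Vu *ᵥ z := by
          rw [hz, Matrix.mulVec_mulVec,
            (Matrix.mem_unitaryGroup_iff).mp Φ.herm.eigenvectorUnitary.2, Matrix.one_mulVec]
        rw [h0, Matrix.mulVec_zero] at h2
        exact hyne h2
      obtain ⟨i, hi⟩ := Function.ne_iff.mp hzne
      have h3 := congrFun hdiagz i
      rw [Matrix.mulVec_diagonal] at h3
      simp only [Pi.smul_apply, smul_eq_mul, Function.comp_apply] at h3
      have h3' : ((μ i : ℝ) : ℂ) * z i = (-((μ j : ℝ) : ℂ)) * z i := by
        rw [show ((μ i : ℝ) : ℂ) = RCLike.ofReal (μ i) from rfl]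
        rw [h3]
        try ring
      have h4 := mul_right_cancel₀ hi h3'
      refine ⟨i, ?_⟩
      have h5 : ((μ i : ℝ) : ℂ) = ((-(μ j) : ℝ) : ℂ) := by push_cast; exact h4
      exact_mod_cast h5
    -- produce the positive and negative extreme eigenvalue indices
    obtain ⟨jp, jm, hjp, hjm, hpm⟩ :
        ∃ jp jm, μ jp = Φ.specRadius ∧ μ jm = -Φ.specRadius ∧ jp ≠ jm := by
      obtain ⟨i, hi⟩ := hsymm
      rcases (abs_eq (le_of_lt hρpos)).mp hj with h | h
      · refine ⟨j, i, h, by rw [hi, h], ?_⟩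
        intro hcontra
        subst hcontra
        linarith [hρpos, h, hi]
      · refine ⟨i, j, by rw [hi, h]; ring, h, ?_⟩
        intro hcontra
        subst hcontra
        linarith [hρpos, h, hi]
    have hzero : ∀ i, i ≠ jp → i ≠ jm → μ i = 0 := by
      have hmem : jm ∈ Finset.univ.erase jp := Finset.mem_erase.mpr ⟨Ne.symm hpm, Finset.mem_univ _⟩
      have h1 : Φ.energy = |μ jp| + ∑ i ∈ Finset.univ.erase jp, |μ i| :=
        (Finset.add_sum_erase Finset.univ (fun i => |μ i|) (Finset.mem_univ jp)).symm
      have h2 : ∑ i ∈ Finset.univ.erase jp, |μ i|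
          = |μ jm| + ∑ i ∈ (Finset.univ.erase jp).erase jm, |μ i| :=
        (Finset.add_sum_erase _ (fun i => |μ i|) hmem).symm
      have habsp : |μ jp| = Φ.specRadius := by rw [hjp, abs_of_pos hρpos]
      have habsm : |μ jm| = Φ.specRadius := by rw [hjm, abs_neg, abs_of_pos hρpos]
      have hrest : ∑ i ∈ (Finset.univ.erase jp).erase jm, |μ i| = 0 := by
        rw [h1, h2, habsp, habsm] at heq
        linarith
      intro i hip him
      have hmem2 : i ∈ (Finset.univ.erase jp).erase jm :=
        Finset.mem_erase.mpr ⟨him, Finset.mem_erase.mpr ⟨hip, Finset.mem_univ _⟩⟩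
      have := (Finset.sum_eq_zero_iff_of_nonneg (fun i _ => abs_nonneg (μ i))).mp hrest i hmem2
      exact abs_eq_zero.mp this
    -- row structure
    set ρ : ℝ := Φ.specRadius with hρdef
    set xh : V → ℂ := fun k => (starRingEnd ℂ) (Vu k jp) with hxh
    set yh : V → ℂ := fun k => (starRingEnd ℂ) (Vu k jm) with hyh
    have hentry : ∀ i k, Φ.A i k
        = ((ρ : ℂ) * Vu i jp) * xh k + ((-(ρ : ℂ)) * Vu i jm) * yh k := by
      intro i k
      rw [Φ.entry_formula i k]
      rw [Finset.sum_eq_add_of_mem jp jm (Finset.mem_univ _) (Finset.mem_univ _) hpm ?_]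
      · rw [hxh, hyh, ← hμdef, hjp, hjm, ← hVu]
        push_cast
        ring
      · intro m _ hm
        rcases hm with ⟨hm1, hm2⟩
        rw [← hμdef, hzero m hm1 hm2]
        simp
    set W : Submodule ℂ (V → ℂ) := Submodule.span ℂ ({xh, yh} : Set (V → ℂ)) with hW
    have hrowW : ∀ i, (fun k => Φ.A i k) ∈ W := by
      intro i
      refine Submodule.mem_span_pair.mpr ⟨(ρ : ℂ) * Vu i jp, (-(ρ : ℂ)) * Vu i jm, ?_⟩
      funext k
      simp only [Pi.add_apply, Pi.smul_apply, smul_eq_mul]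
      exact (hentry i k).symm
    have hWfr : Module.finrank ℂ ↥W ≤ 2 := finrank_span_pair_le xh yh
    -- there is an edge
    have hedge : ∃ u v, Φ.G.Adj u v := by
      by_contra hno
      push_neg at hno
      have hA0 : ∀ a b, Φ.A a b = 0 := fun a b => Φ.zeroGain a b (hno a b)
      have h := Φ.herm.mulVec_eigenvectorBasis jp
      have hbvec : ∃ v, Φ.herm.eigenvectorBasis jp v ≠ 0 := by
        by_contra hall
        push_neg at hall
        have h2 : Φ.herm.eigenvectorBasis jp = 0 := by ext v; exact hall v
        have h1 := (Φ.herm.eigenvectorBasis).orthonormal.1 jp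
        rw [h2] at h1; simp at h1
      obtain ⟨v, hv⟩ := hbvec
      have h4 := congrFun h v
      have hL : (Φ.A *ᵥ ⇑(Φ.herm.eigenvectorBasis jp)) v = 0 := by
        simp [Matrix.mulVec, dotProduct, hA0]
      rw [hL] at h4
      have h5 : Φ.herm.eigenvalues jp • (Φ.herm.eigenvectorBasis jp v) = 0 := by
        simpa using h4.symm
      rcases smul_eq_zero.mp h5 with h' | h'
      · refine hρ ?_
        rw [← hjp, hμdef]
        exact h'
      · exact hv h'
    -- no isolated vertices
    have hnbr : ∀ u : V, ∃ w, Φ.G.Adj u w := by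
      intro u
      obtain ⟨a, b, hab⟩ := hedge
      by_cases hua : u = a
      · exact ⟨b, hua ▸ hab⟩
      · obtain ⟨w⟩ := hconn.preconnected u a
        cases w with
        | nil => exact absurd rfl hua
        | cons h _ => exact ⟨_, h⟩
    -- same-colored vertices have proportional rows
    have main : ∀ a b u : V, Φ.G.Adj a b → c u = c a →
        ∃ t : ℂ, t ≠ 0 ∧ ∀ v, Φ.A u v = t * Φ.A a v := by
      intro a b u hab hu
      set ra : V → ℂ := fun k => Φ.A a k with hra
      set rb : V → ℂ := fun k => Φ.A b k with hrb
      set ru : V → ℂ := fun k => Φ.A u k with hru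
      have hAab : Φ.A a b ≠ 0 := (Φ.adj_iff_ne_zero a b).mp hab
      have hAba : Φ.A b a ≠ 0 := (Φ.adj_iff_ne_zero b a).mp hab.symm
      have hli : LinearIndependent ℂ ![ra, rb] := by
        rw [LinearIndependent.pair_iff]
        intro s t hst
        have h1 := congrFun hst b
        have h2 := congrFun hst a
        simp only [Pi.add_apply, Pi.smul_apply, smul_eq_mul, Pi.zero_apply, hra, hrb] at h1 h2
        rw [Φ.diag_zero b, mul_zero, add_zero] at h1
        rw [Φ.diag_zero a, mul_zero, zero_add] at h2
        exact ⟨(mul_eq_zero.mp h1).resolve_right hAab,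
          (mul_eq_zero.mp h2).resolve_right hAba⟩
      have hS : Submodule.span ℂ ({ra, rb} : Set (V → ℂ)) = W := by
        have hle : Submodule.span ℂ ({ra, rb} : Set (V → ℂ)) ≤ W := by
          rw [Submodule.span_le]
          intro z hz
          rcases hz with hz | hz
          · rw [hz]; exact hrowW a
          · rw [Set.mem_singleton_iff] at hz; rw [hz]; exact hrowW b
        have hfr : Module.finrank ℂ ↥(Submodule.span ℂ ({ra, rb} : Set (V → ℂ))) = 2 := by
          rw [← range_pair_eq ra rb, finrank_span_eq_card hli]
          simp
        exact (Submodule.eq_of_le_of_finrank_le hle (by rw [hfr]; exact hWfr)).symm ▸ rfl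
      have hmem : ru ∈ Submodule.span ℂ ({ra, rb} : Set (V → ℂ)) := by
        rw [hS]; exact hrowW u
      obtain ⟨s, t, hst⟩ := Submodule.mem_span_pair.mp hmem
      have hcab : c a ≠ c b := c.valid hab
      have ht0 : t = 0 := by
        by_contra ht
        apply hAba
        have hall : ∀ w, t * Φ.A b w = 0 := by
          intro w
          by_cases hw : c w = c a
          · have h1 := congrFun hst w
            simp only [Pi.add_apply, Pi.smul_apply, smul_eq_mul, hra, hrb, hru] at h1
            have hAuw : Φ.A u w = 0 := by
              by_contra h
              exact (c.valid ((Φ.adj_iff_ne_zero u w).mpr h)) (hu.trans hw.symm)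
            have hAaw : Φ.A a w = 0 := by
              by_contra h
              exact (c.valid ((Φ.adj_iff_ne_zero a w).mpr h)) hw.symm
            rw [hAaw, mul_zero, zero_add] at h1
            rw [h1, hAuw]
          · have hwb : c w = c b := fin2_resolve (c a) (c b) (c w) hcab hw
            have hbw : Φ.A b w = 0 := by
              by_contra h
              exact (c.valid ((Φ.adj_iff_ne_zero b w).mpr h)) hwb.symm
            rw [hbw, mul_zero]
        exact (mul_eq_zero.mp (hall a)).resolve_left ht
      have hts : ∀ v, Φ.A u v = s * Φ.A a v := by
        intro v
        have h1 := congrFun hst v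
        simp only [Pi.add_apply, Pi.smul_apply, smul_eq_mul, hra, hrb, hru] at h1
        rw [ht0, zero_mul, add_zero] at h1
        exact h1.symm
      have hsne : s ≠ 0 := by
        obtain ⟨w, hw⟩ := hnbr u
        have hne' : Φ.A u w ≠ 0 := (Φ.adj_iff_ne_zero u w).mp hw
        intro h0
        apply hne'
        rw [hts w, h0, zero_mul]
      exact ⟨s, hsne, hts⟩
    obtain ⟨u₀, v₀, huv⟩ := hedge
    have hc0 : c u₀ ≠ c v₀ := c.valid huv
    have hPQ : ∀ u v, c u = c u₀ → c v = c v₀ → Φ.G.Adj u v := by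
      intro u v hu hv
      obtain ⟨t, htne, hA⟩ := main u₀ v₀ u huv hu
      obtain ⟨t', htne', hA'⟩ := main v₀ u₀ v huv.symm hv
      have hAvu0 : Φ.A v u₀ ≠ 0 := by
        rw [hA' u₀]
        exact mul_ne_zero htne' ((Φ.adj_iff_ne_zero v₀ u₀).mp huv.symm)
      have hAu0v : Φ.A u₀ v ≠ 0 := by
        have hadj : Φ.G.Adj v u₀ := (Φ.adj_iff_ne_zero v u₀).mpr hAvu0
        exact (Φ.adj_iff_ne_zero u₀ v).mp hadj.symm
      refine (Φ.adj_iff_ne_zero u v).mpr ?_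
      rw [hA v]
      exact mul_ne_zero htne hAu0v
    have hcb : ∀ u v, Φ.G.Adj u v ↔
        ((c u = c u₀ ∧ c v = c v₀) ∨ (c u = c v₀ ∧ c v = c u₀)) := by
      intro u v
      constructor
      · intro h
        have hne' := c.valid h
        by_cases hu : c u = c u₀
        · left
          refine ⟨hu, fin2_resolve (c u₀) (c v₀) (c v) hc0 ?_⟩
          rw [← hu]; exact hne'.symm
        · right
          have hu' : c u = c v₀ := fin2_resolve (c u₀) (c v₀) (c u) hc0 hu
          refine ⟨hu', fin2_resolve (c v₀) (c u₀) (c v) (Ne.symm hc0) ?_⟩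
          rw [← hu']; exact hne'.symm
      · rintro (⟨hu, hv⟩ | ⟨hu, hv⟩)
        · exact hPQ u v hu hv
        · exact (hPQ v u hv hu).symm
    -- the switching function
    have hconjmul : ∀ {z : ℂ}, ‖z‖ = 1 → (starRingEnd ℂ) z * z = 1 := by
      intro z hz
      rw [mul_comm, Complex.mul_conj, Complex.normSq_eq_norm_sq, hz]
      norm_num
    set sfun : V → ℂ := fun u => if c u = c u₀
      then Φ.A u v₀ * (starRingEnd ℂ) (Φ.A u₀ v₀) else (starRingEnd ℂ) (Φ.A u₀ u) with hsfun
    have hP : ∀ u, c u = c u₀ →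
        ∀ v, Φ.A u v = (Φ.A u v₀ * (starRingEnd ℂ) (Φ.A u₀ v₀)) * Φ.A u₀ v := by
      intro u hu v
      obtain ⟨t, htne, hA⟩ := main u₀ v₀ u huv hu
      have ht : t = Φ.A u v₀ * (starRingEnd ℂ) (Φ.A u₀ v₀) := by
        rw [hA v₀, mul_assoc, mul_comm (Φ.A u₀ v₀), hconjmul (Φ.unitGain _ _ huv), mul_one]
      rw [← ht]; exact hA v
    have habs_s : ∀ u, ‖sfun u‖ = 1 := by
      intro u
      by_cases hu : c u = c u₀
      · simp only [hsfun, if_pos hu]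
        rw [norm_mul, Complex.norm_conj, Φ.unitGain u₀ v₀ huv,
          Φ.unitGain u v₀ (hPQ u v₀ hu rfl), mul_one]
      · have hu' : c u = c v₀ := fin2_resolve (c u₀) (c v₀) (c u) hc0 hu
        simp only [hsfun, if_neg hu]
        rw [Complex.norm_conj]
        exact Φ.unitGain u₀ u (hPQ u₀ u rfl hu')
    have hUmem : Matrix.diagonal sfun ∈ Matrix.unitaryGroup V ℂ := by
      rw [Matrix.mem_unitaryGroup_iff']
      rw [Matrix.star_eq_conjTranspose, Matrix.diagonal_conjTranspose,
        Matrix.diagonal_mul_diagonal]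
      ext a b
      rcases eq_or_ne a b with rfl | hab
      · rw [Matrix.diagonal_apply_eq, Matrix.one_apply_eq]
        exact hconjmul (habs_s a)
      · rw [Matrix.diagonal_apply_ne _ hab, Matrix.one_apply_ne hab]
    have hherm : ∀ i k, Φ.A i k = (starRingEnd ℂ) (Φ.A k i) := by
      intro i k
      have h := congr_fun (congr_fun Φ.herm i) k
      rw [Matrix.conjTranspose_apply] at h
      exact h.symm
    have hswitch : Φ.A = Matrix.diagonal sfun * Φ.G.adjMatrix ℂ * (Matrix.diagonal sfun)ᴴ := by
      ext i k
      rw [Matrix.diagonal_conjTranspose, Matrix.mul_diagonal, Matrix.diagonal_mul]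
      by_cases hadj : Φ.G.Adj i k
      · rw [SimpleGraph.adjMatrix_apply, if_pos hadj]
        rcases (hcb i k).mp hadj with ⟨hi, hk⟩ | ⟨hi, hk⟩
        · have hknot : ¬ c k = c u₀ := by rw [hk]; exact Ne.symm hc0
          simp only [hsfun, if_pos hi, if_neg hknot, Pi.star_apply, Complex.star_def,
            Complex.conj_conj, mul_one]
          exact hP i hi k
        · have hinot : ¬ c i = c u₀ := by rw [hi]; exact Ne.symm hc0
          simp only [hsfun, if_neg hinot, if_pos hk, Pi.star_apply, Complex.star_def, mul_one]
          rw [hherm i k, hP k hk i]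
          simp only [_root_.map_mul, Complex.conj_conj]
          ring
      · rw [SimpleGraph.adjMatrix_apply, if_neg hadj, Φ.zeroGain i k hadj]
        ring
    -- the bipartition equivalence
    set P : V → Prop := fun u => c u = c u₀ with hPdef
    haveI : DecidablePred P := Classical.decPred P
    set e : V ≃ (Fin (Fintype.card {u // P u}) ⊕ Fin (Fintype.card {u // ¬ P u})) :=
      (Equiv.sumCompl P).symm.trans
        (Equiv.sumCongr (Fintype.equivFin {u // P u}) (Fintype.equivFin {u // ¬ P u})) with hedef
    have hleft : ∀ u (h : P u), e u = Sum.inl ((Fintype.equivFin {u // P u}) ⟨u, h⟩) := by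
      intro u h
      simp [hedef, Equiv.sumCompl_symm_apply_of_pos (p := P) h]
    have hright : ∀ u (h : ¬ P u), e u = Sum.inr ((Fintype.equivFin {u // ¬ P u}) ⟨u, h⟩) := by
      intro u h
      simp [hedef, Equiv.sumCompl_symm_apply_of_neg (p := P) h]
    have hQiff : ∀ u, ¬ P u ↔ c u = c v₀ := by
      intro u
      constructor
      · exact fun h => fin2_resolve (c u₀) (c v₀) (c u) hc0 h
      · intro h hP'
        exact hc0 (hP'.symm.trans h)
    refine ⟨_, _, ⟨⟨e, ?_⟩, Matrix.diagonal sfun, Matrix.isDiag_diagonal sfun, hUmem, hswitch⟩⟩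
    intro i k
    rw [hcb i k]
    constructor
    · rintro (⟨hi, hk⟩ | ⟨hi, hk⟩)
      · rw [hleft i hi, hright k ((hQiff k).mpr hk)]
        simp
      · rw [hright i ((hQiff i).mpr hi), hleft k hk]
        simp
    · intro h
      by_cases hi : P i <;> by_cases hk : P k
      · rw [hleft i hi, hleft k hk] at h; simp at h
      · exact Or.inl ⟨hi, (hQiff k).mp hk⟩
      · exact Or.inr ⟨(hQiff i).mp hi, hk⟩
      · rw [hright i hi, hright k hk] at h; simp at h




end TGainGraph

end Aux
open TGainGraph in
/-- `E(Φ) ≥ 2ρ(Φ)` for a connected gain graph; if moreover `G` is bipartite,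
equality holds iff `Φ ∼ (K_{p,q},1)` for some `p, q`. -/
theorem two_specRadius_le_energy {V : Type*} [Fintype V] [DecidableEq V]
    (Φ : TGainGraph V) (hconn : Φ.G.Connected) :
    2 * Φ.specRadius ≤ Φ.energy ∧
    (Φ.G.Colorable 2 →
      (Φ.energy = 2 * Φ.specRadius ↔
        ∃ p q : ℕ, Φ.SwitchEquivToCompleteBipartite p q)) := by
  have hne : Nonempty V := hconn.nonempty
  refine ⟨Φ.two_mul_specRadius_le, fun hcol => ⟨fun heq => Φ.forward_case hconn hcol heq, ?_⟩⟩
  rintro ⟨p, q, h⟩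
  have h1 := Φ.two_mul_specRadius_le
  have h2 := Φ.energy_le_of_rank_le_two (Φ.rank_le_two_of_switchEquiv h)
  linarith
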